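/- In the d-dimensional Hamming cube, if A is a subset of the even vertices with |A| ≤ d^C for a fixed constant C (and d sufficiently large), then |A| ≤ O(1/d)·|N(A)|; equivalently, there is a constant c > 0 such that |N(A)| ≥ c·d·|A| whenever |A| ≤ d^C. -/

import Mathlib

/-- The `d`-dimensional Hamming cube: vertices are `{0,1}^d`,
adjacency = Hamming distance exactly 1. -/
def cube (d : ℕ) : SimpleGraph (Fin d → Bool) where
  Adj x y := hammingDist x y = 1
  symm.symm x y h := by show hammingDist y x = 1; rwa [hammingDist_comm]
  loopless.irrefl x h := by simp [show hammingDist x x = 1 from h] at h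

/-- A vertex is even if it has an even number of `1`-coordinates. -/
def isEvenVtx {d : ℕ} (v : Fin d → Bool) : Prop :=
  Even (Finset.univ.filter (fun i => v i = true)).card

/-- Neighborhood of a set of vertices. -/
def nbhd {d : ℕ} (A : Set (Fin d → Bool)) : Set (Fin d → Bool) :=
  {v | ∃ a ∈ A, (cube d).Adj a v}

/-- `s` is an independent set in `G`. -/
def IsIndepSet {V : Type*} (G : SimpleGraph V) (s : Set V) : Prop :=
  s.Pairwise (fun u v => ¬ G.Adj u v)

/-- Balanced independent sets of the Hamming cube. -/
def balancedIndep (d : ℕ) : Set (Set (Fin d → Bool)) :=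
  {I | IsIndepSet (cube d) I ∧
    (I ∩ {v | isEvenVtx v}).ncard = (I ∩ {v | ¬ isEvenVtx v}).ncard}

/-- The number of balanced independent sets in `Q_d`. -/
noncomputable def bis (d : ℕ) : ℕ := (balancedIndep d).ncard

/-- `A` is `k`-linked: any two vertices of `A` are joined by a chain within `A`
whose consecutive elements are at Hamming distance at most `k`. -/
def kLinked (d k : ℕ) (A : Set (Fin d → Bool)) : Prop :=
  ∀ u ∈ A, ∀ w ∈ A,
    Relation.ReflTransGen (fun a b => b ∈ A ∧ hammingDist a b ≤ k) u w

/-- `B` is a 2-component of `A`: a maximal 2-linked subset. -/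
def isTwoComponent (d : ℕ) (A B : Set (Fin d → Bool)) : Prop :=
  B ⊆ A ∧ B.Nonempty ∧ kLinked d 2 B ∧
    ∀ B', B ⊆ B' → B' ⊆ A → kLinked d 2 B' → B' = B

/-- The closure `[A] = {v : N(v) ⊆ N(A)}`. -/
def closure' {d : ℕ} (A : Set (Fin d → Bool)) : Set (Fin d → Bool) :=
  {v | (cube d).neighborSet v ⊆ nbhd A}

/-- Binary entropy function (base-2 logs; `H 0 = H 1 = 0` by `logb` conventions). -/
noncomputable def binH (a : ℝ) : ℝ :=
  -(a * Real.logb 2 a) - (1 - a) * Real.logb 2 (1 - a)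

open Finset
open scoped FinsetFamily

attribute [-instance] instDecidableEqFin

namespace IsoAux



lemma fin_key {N : ℕ} {g : Fin N → ℕ} (hstep : ∀ a b : Fin N, (a : ℕ) + 1 = b → g a + 1 ≤ g b) :
    ∀ (k : ℕ) (a b : Fin N), (a : ℕ) + k = (b : ℕ) → g a + k ≤ g b := by
  intro k
  induction k with
  | zero =>
      intro a b hab
      have : a = b := Fin.ext (by omega)
      rw [this]
      omega
  | succ k ih =>
      intro a b hab
      have hlt : (a : ℕ) + k < N := by have := b.isLt; omega
      set b' : Fin N := ⟨(a : ℕ) + k, hlt⟩ with hb'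
      have h1 := ih a b' rfl
      have h2 := hstep b' b (by simp [hb']; omega)
      omega

lemma fin_mono_key {N : ℕ} {g : Fin N → ℕ} (hstep : ∀ a b : Fin N, (a : ℕ) + 1 = b → g a ≤ g b) :
    ∀ (k : ℕ) (a b : Fin N), (a : ℕ) + k = (b : ℕ) → g a ≤ g b := by
  intro k
  induction k with
  | zero =>
      intro a b hab
      have : a = b := Fin.ext (by omega)
      rw [this]
  | succ k ih =>
      intro a b hab
      have hlt : (a : ℕ) + k < N := by have := b.isLt; omega
      set b' : Fin N := ⟨(a : ℕ) + k, hlt⟩ with hb'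
      have h1 := ih a b' rfl
      have h2 := hstep b' b (by simp [hb']; omega)
      omega

/-- step-monotone implies monotone for `Fin` indexed functions -/
lemma fin_mono_of_step {N : ℕ} {g : Fin N → ℕ}
    (h : ∀ a b : Fin N, (a : ℕ) + 1 = b → g a ≤ g b) :
    Monotone g := by
  intro a b hab
  exact fin_mono_key h ((b : ℕ) - (a : ℕ)) a b (by have : (a : ℕ) ≤ b := hab; omega)

/-- strict mono `Fin N → ℕ` grows at least linearly -/
lemma fin_strictMono_gap {N : ℕ} {g : Fin N → ℕ} (hg : StrictMono g) :
    ∀ a b : Fin N, a ≤ b → g a + ((b : ℕ) - a) ≤ g b := by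
  intro a b hab
  exact fin_key (g := g) (fun x y hxy => hg (Fin.lt_def.mpr (by omega))) ((b : ℕ) - (a : ℕ)) a b
    (by have : (a : ℕ) ≤ b := hab; omega)

lemma fin_strictMono_le {N : ℕ} {g : Fin N → ℕ} (hg : StrictMono g) (i : Fin N) :
    (i : ℕ) ≤ g i := by
  have hN : 0 < N := lt_of_le_of_lt (Nat.zero_le _) i.isLt
  have := fin_key (g := g) (fun x y hxy => hg (Fin.lt_def.mpr (by omega))) (i : ℕ)
    ⟨0, hN⟩ i (by simp)
  omega

/-- Chebyshev-type inequality for monotone sequences, in ℕ. -/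
lemma cheb (N : ℕ) (w : Fin N → ℕ) (hw : Monotone w) :
    (N + 1) * ∑ i, w i ≤ 2 * ∑ i : Fin N, ((i : ℕ) + 1) * w i := by
  induction N with
  | zero => simp
  | succ N ih =>
      rw [Fin.sum_univ_castSucc (f := w),
        Fin.sum_univ_castSucc (f := fun i : Fin (N+1) => ((i : ℕ) + 1) * w i)]
      have hmono : Monotone (w ∘ Fin.castSucc) := by
        intro a b hab
        exact hw (Fin.castSucc_le_castSucc_iff.mpr hab)
      have IH := ih (w ∘ Fin.castSucc) hmono
      have hWx : ∑ i : Fin N, (w ∘ Fin.castSucc) i ≤ N * w (Fin.last N) := by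
        calc ∑ i : Fin N, (w ∘ Fin.castSucc) i
            ≤ #(univ : Finset (Fin N)) • w (Fin.last N) := by
              apply sum_le_card_nsmul
              intro i _
              exact hw (Fin.le_last _)
          _ = N * w (Fin.last N) := by
              rw [card_univ, Fintype.card_fin, smul_eq_mul]
      simp only [Function.comp] at IH hWx
      simp only [Fin.coe_castSucc, Fin.val_last]
      nlinarith [IH, hWx]

/-- The key numeric inequality for the cascade. -/
lemma arith (j' t : ℕ) (w b : Fin (j' + 1) → ℕ) (hw : Monotone w)
    (hb1 : ∀ i, 1 ≤ b i)
    (hwb : ∀ i : Fin (j' + 1), ((i : ℕ) + 1) * w i ≤ t * b i)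
    (hb0 : b 0 = 1) :
    (j' + 1) * (1 + ∑ i, w i) ≤ (2 * t + 4) * (1 + ∑ i : Fin j', b i.succ) := by
  have hS1 : ∑ i : Fin (j'+1), ((i : ℕ) + 1) * w i ≤ t * (1 + ∑ i : Fin j', b i.succ) := by
    calc ∑ i : Fin (j'+1), ((i : ℕ) + 1) * w i ≤ ∑ i : Fin (j'+1), t * b i :=
          sum_le_sum fun i _ => hwb i
      _ = t * ∑ i : Fin (j'+1), b i := by rw [mul_sum]
      _ = t * (1 + ∑ i : Fin j', b i.succ) := by rw [Fin.sum_univ_succ, hb0]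
  have hcheb := cheb (j'+1) w hw
  have hB2 : j' ≤ ∑ i : Fin j', b i.succ := by
    calc (j' : ℕ) = #(univ : Finset (Fin j')) • 1 := by simp
      _ ≤ ∑ i : Fin j', b i.succ := card_nsmul_le_sum _ _ _ fun i _ => hb1 _
  nlinarith [hcheb, hS1, hB2]



lemma card_initSeg_eq {n j : ℕ} (s : Finset (Fin n)) (f : Fin j → Fin n)
    (hf : StrictMono f) (hrange : ∀ x, x ∈ s ↔ ∃ i, f i = x) :
    #(Colex.initSeg s) = 1 + ∑ i : Fin j, ((f i : ℕ).choose ((i : ℕ) + 1)) := by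
  have hs_eq : s = univ.image f := by
    ext x; simp [hrange, eq_comm, mem_image]
  have hcard : #s = j := by
    rw [hs_eq, card_image_of_injective _ hf.injective, card_univ, Fintype.card_fin]
  set Upper : Fin j → Finset (Fin n) := fun i => s.filter (fun x => f i < x) with hUpper
  have hUpper_eq : ∀ i, Upper i = (Ioi i).image f := by
    intro i; ext x
    simp only [hUpper, mem_filter, mem_image, mem_Ioi, hrange]
    constructor
    · rintro ⟨⟨i', rfl⟩, hlt⟩
      exact ⟨i', hf.lt_iff_lt.mp hlt, rfl⟩
    · rintro ⟨i', hlt, rfl⟩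
      exact ⟨⟨i', rfl⟩, hf hlt⟩
  have hUpper_card : ∀ i, #(Upper i) = j - 1 - (i : ℕ) := by
    intro i
    rw [hUpper_eq, card_image_of_injective _ hf.injective, Fin.card_Ioi]
  have hfs : ∀ i, f i ∈ s := fun i => (hrange _).mpr ⟨i, rfl⟩
  set Cls : Fin j → Finset (Finset (Fin n)) :=
    fun i => (powersetCard ((i : ℕ) + 1) (Iio (f i))).image (fun B => B ∪ Upper i) with hCls
  have hdisjBU : ∀ (i : Fin j) (B : Finset (Fin n)), B ⊆ Iio (f i) → Disjoint B (Upper i) := by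
    intro i B hB
    rw [disjoint_left]
    intro x hxB hxU
    have h1 : x < f i := mem_Iio.mp (hB hxB)
    have h2 : f i < x := (mem_filter.mp hxU).2
    exact absurd (h1.trans h2) (lt_irrefl x)
  have hCls_card : ∀ i, #(Cls i) = (f i : ℕ).choose ((i : ℕ) + 1) := by
    intro i
    rw [hCls]
    rw [card_image_of_injOn, card_powersetCard, Fin.card_Iio]
    intro B1 h1 B2 h2 heq
    rw [mem_coe, mem_powersetCard] at h1 h2
    have key : ∀ B : Finset (Fin n), B ⊆ Iio (f i) → (B ∪ Upper i).filter (fun x => x < f i) = B := by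
      intro B hB
      ext x
      simp only [mem_filter, mem_union]
      constructor
      · rintro ⟨hx | hx, hlt⟩
        · exact hx
        · exact absurd ((mem_filter.mp hx).2.trans hlt) (lt_irrefl _)
      · intro hx
        exact ⟨Or.inl hx, mem_Iio.mp (hB hx)⟩
    have heq' : B1 ∪ Upper i = B2 ∪ Upper i := heq
    rw [← key B1 h1.1, ← key B2 h2.1, heq']
  have hnotmem : ∀ (i : Fin j) (T : Finset (Fin n)), T ∈ Cls i → f i ∉ T := by
    intro i T hT
    obtain ⟨B, hB, rfl⟩ := mem_image.mp hT
    rw [mem_powersetCard] at hB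
    intro hmem
    rcases mem_union.mp hmem with h | h
    · exact absurd (mem_Iio.mp (hB.1 h)) (lt_irrefl _)
    · exact absurd (mem_filter.mp h).2 (lt_irrefl _)
  have hmemgt : ∀ i i' : Fin j, i < i' → ∀ T ∈ Cls i, f i' ∈ T := by
    intro i i' hlt T hT
    obtain ⟨B, _, rfl⟩ := mem_image.mp hT
    exact mem_union.mpr (Or.inr (mem_filter.mpr ⟨hfs i', hf hlt⟩))
  have hmain : Colex.initSeg s = insert s ((univ : Finset (Fin j)).biUnion Cls) := by
    ext T
    simp only [mem_insert, mem_biUnion, mem_univ, true_and]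
    rw [Colex.mem_initSeg]
    constructor
    · rintro ⟨hc, hle⟩
      by_cases hTs : T = s
      · exact Or.inl hTs
      right
      have hlt : toColex T < toColex s :=
        hle.lt_of_ne (fun h => hTs (toColex_inj.mp h))
      obtain ⟨w, hw, hfilt⟩ := Colex.lt_iff_exists_filter_lt.mp hlt
      obtain ⟨hws, hwT⟩ := mem_sdiff.mp hw
      obtain ⟨i, rfl⟩ := (hrange w).mp hws
      refine ⟨i, ?_⟩
      set B : Finset (Fin n) := T.filter (fun x => x < f i) with hBdef
      have hsplit : T = B ∪ T.filter (fun x => f i < x) := by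
        ext x
        simp only [hBdef, mem_union, mem_filter]
        constructor
        · intro hx
          rcases lt_trichotomy x (f i) with h | h | h
          · exact Or.inl ⟨hx, h⟩
          · exact absurd (h ▸ hx) hwT
          · exact Or.inr ⟨hx, h⟩
        · rintro (⟨hx, _⟩ | ⟨hx, _⟩) <;> exact hx
      have hupT : T.filter (fun x => f i < x) = Upper i := hfilt
      have hdisj : Disjoint B (T.filter (fun x => f i < x)) := by
        rw [disjoint_left]
        intro x hx1 hx2
        exact absurd ((mem_filter.mp hx1).2.trans (mem_filter.mp hx2).2) (lt_irrefl x)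
      have hTcard : #T = j := by rw [← hc, hcard]
      have hBcard : #B = (i : ℕ) + 1 := by
        have h1 : #T = #B + #(T.filter (fun x => f i < x)) := by
          conv_lhs => rw [hsplit]
          exact card_union_of_disjoint hdisj
        rw [hupT, hUpper_card] at h1
        have := i.isLt
        omega
      rw [mem_image]
      refine ⟨B, mem_powersetCard.mpr ⟨fun x hx => mem_Iio.mpr (mem_filter.mp hx).2, hBcard⟩, ?_⟩
      rw [← hupT, ← hsplit]
    · rintro (rfl | ⟨i, hT⟩)
      · exact ⟨rfl, le_rfl⟩
      obtain ⟨B, hB, rfl⟩ := mem_image.mp hT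
      rw [mem_powersetCard] at hB
      obtain ⟨hBsub, hBcard⟩ := hB
      constructor
      · rw [card_union_of_disjoint (hdisjBU i B hBsub), hBcard, hUpper_card, hcard]
        have := i.isLt
        omega
      · apply le_of_lt
        apply Colex.lt_iff_exists_filter_lt.mpr
        refine ⟨f i, mem_sdiff.mpr ⟨hfs i, ?_⟩, ?_⟩
        · intro hmem
          rcases mem_union.mp hmem with h | h
          · exact absurd (mem_Iio.mp (hBsub h)) (lt_irrefl _)
          · exact absurd (mem_filter.mp h).2 (lt_irrefl _)
        · rw [filter_union]
          have h1 : B.filter (fun x => f i < x) = ∅ := by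
            apply filter_false_of_mem
            intro x hx
            exact not_lt_of_gt (mem_Iio.mp (hBsub hx))
          have h2 : (Upper i).filter (fun x => f i < x) = Upper i := by
            apply filter_true_of_mem
            intro x hx
            exact (mem_filter.mp hx).2
          rw [h1, h2, empty_union]
  have hdisjCls : ∀ x ∈ (univ : Finset (Fin j)), ∀ y ∈ (univ : Finset (Fin j)), x ≠ y →
      Disjoint (Cls x) (Cls y) := by
    intro x _ y _ hxy
    rw [disjoint_left]
    intro T hTx hTy
    rcases lt_or_gt_of_ne hxy with h | h
    · exact hnotmem y T hTy (hmemgt x y h T hTx)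
    · exact hnotmem x T hTx (hmemgt y x h T hTy)
  have hsnot : s ∉ (univ : Finset (Fin j)).biUnion Cls := by
    simp only [mem_biUnion, mem_univ, true_and, not_exists]
    intro i hi
    exact hnotmem i s hi (hfs i)
  rw [hmain, card_insert_of_notMem hsnot, card_biUnion hdisjCls, add_comm]
  congr 1
  exact sum_congr rfl (fun i _ => hCls_card i)



lemma exists_le_filter_card {γ : Type*} [LinearOrder γ] (F : Finset γ) :
    ∀ m : ℕ, 1 ≤ m → m ≤ #F → ∃ x ∈ F, #(F.filter (· ≤ x)) = m := by
  induction F using Finset.strongInduction with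
  | _ F ih =>
    intro m hm1 hmF
    have hne : F.Nonempty := card_pos.mp (lt_of_lt_of_le hm1 hmF)
    set y := F.max' hne with hy
    by_cases hm : m = #F
    · refine ⟨y, F.max'_mem hne, ?_⟩
      rw [filter_true_of_mem (fun z hz => F.le_max' z hz), ← hm]
    · have hss : F.erase y ⊂ F := erase_ssubset (F.max'_mem hne)
      have hcard : #(F.erase y) = #F - 1 := card_erase_of_mem (F.max'_mem hne)
      obtain ⟨x, hx, hcardx⟩ := ih (F.erase y) hss m hm1 (by omega)
      have hxF : x ∈ F := mem_of_mem_erase hx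
      have hxy : x ≠ y := ne_of_mem_erase hx
      refine ⟨x, hxF, ?_⟩
      rw [show F.filter (· ≤ x) = (F.erase y).filter (· ≤ x) from ?_, hcardx]
      ext z
      simp only [mem_filter, mem_erase]
      constructor
      · rintro ⟨hzF, hzx⟩
        refine ⟨⟨fun hzy => ?_, hzF⟩, hzx⟩
        subst hzy
        exact hxy (le_antisymm (F.le_max' x hxF) hzx)
      · rintro ⟨⟨_, hzF⟩, hzx⟩
        exact ⟨hzF, hzx⟩

lemma exists_initSeg_card {n : ℕ} (j m : ℕ) (hm : 1 ≤ m) (hmn : m ≤ n.choose j) :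
    ∃ s : Finset (Fin n), #s = j ∧ #(Colex.initSeg s) = m := by
  set F : Finset (Colex (Finset (Fin n))) := (powersetCard j (univ : Finset (Fin n))).image toColex
    with hF
  have hFcard : #F = n.choose j := by
    rw [hF, card_image_of_injective _ toColex.injective, card_powersetCard, card_univ,
      Fintype.card_fin]
  obtain ⟨x, hxF, hx⟩ := exists_le_filter_card F m hm (by omega)
  obtain ⟨s₀, hs₀, hxeq⟩ := mem_image.mp hxF
  have hs₀j : #s₀ = j := (mem_powersetCard.mp hs₀).2
  refine ⟨s₀, hs₀j, ?_⟩
  rw [← hx]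
  have himg : Colex.initSeg s₀ = (F.filter (· ≤ x)).image ofColex := by
    ext u
    rw [Colex.mem_initSeg]
    simp only [mem_image, mem_filter, hF, mem_image]
    constructor
    · rintro ⟨hcard, hle⟩
      refine ⟨toColex u, ⟨⟨u, mem_powersetCard.mpr ⟨subset_univ u, by omega⟩, rfl⟩, ?_⟩, rfl⟩
      rw [← hxeq]; exact hle
    · rintro ⟨v, ⟨⟨u', hu', rfl⟩, hle⟩, rfl⟩
      have hu'j : #u' = j := (mem_powersetCard.mp hu').2
      refine ⟨by rw [hs₀j]; exact hu'j.symm, ?_⟩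
      rw [← hxeq] at hle
      exact hle
  rw [himg, card_image_of_injective _ ofColex.injective]

lemma kk_mult {n : ℕ} (j t : ℕ) (S : Finset (Finset (Fin n)))
    (hS : Set.Sized j (S : Set (Finset (Fin n)))) (hm : #S ≤ (j + t).choose j) :
    j * #S ≤ (2 * t + 4) * #(∂ S) := by
  rcases Nat.eq_zero_or_pos #S with h0 | hpos
  · rw [h0]; simp
  rcases Nat.eq_zero_or_pos j with rfl | hj
  · simp
  obtain ⟨j', rfl⟩ : ∃ j', j = j' + 1 := ⟨j - 1, by omega⟩
  have hSsub : S ⊆ powersetCard (j' + 1) (univ : Finset (Fin n)) := fun T hT =>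
    mem_powersetCard.mpr ⟨subset_univ T, hS hT⟩
  have hmn : #S ≤ n.choose (j' + 1) := by
    calc #S ≤ #(powersetCard (j' + 1) (univ : Finset (Fin n))) := card_le_card hSsub
      _ = n.choose (j' + 1) := by rw [card_powersetCard, card_univ, Fintype.card_fin]
  obtain ⟨s, hsj, hsm⟩ := exists_initSeg_card (j' + 1) #S hpos hmn
  have hs : s.Nonempty := card_pos.mp (by omega)
  set e := s.orderIsoOfFin hsj with he
  have hf : StrictMono (fun i : Fin (j' + 1) => ((e i : {x // x ∈ s}) : Fin n)) :=
    fun a b hab => Subtype.coe_lt_coe.mpr (e.strictMono hab)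
  set f : Fin (j' + 1) → Fin n := fun i => ((e i : {x // x ∈ s}) : Fin n) with hfdef
  have hrange : ∀ x, x ∈ s ↔ ∃ i, f i = x := by
    intro x
    constructor
    · intro hx
      exact ⟨e.symm ⟨x, hx⟩, by simp [hfdef]⟩
    · rintro ⟨i, rfl⟩
      exact (e i).2
  have hcount := card_initSeg_eq s f hf hrange
  have hKK : #(∂ (Colex.initSeg s)) ≤ #(∂ S) :=
    kruskal_katona hS (le_of_eq hsm) (hsj ▸ Colex.isInitSeg_initSeg)
  rw [Colex.shadow_initSeg hs] at hKK
  have hmin : s.min' hs = f 0 := by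
    apply le_antisymm
    · exact min'_le _ _ ((hrange _).mpr ⟨0, rfl⟩)
    · apply le_min'
      intro y hy
      obtain ⟨i, rfl⟩ := (hrange y).mp hy
      exact hf.monotone (Fin.zero_le i)
  have hf' : StrictMono (fun i : Fin j' => f i.succ) :=
    fun a b hab => hf (Fin.succ_lt_succ_iff.mpr hab)
  have hrange' : ∀ x, x ∈ s.erase (s.min' hs) ↔ ∃ i : Fin j', f i.succ = x := by
    intro x
    rw [mem_erase, hmin]
    constructor
    · rintro ⟨hne, hx⟩
      obtain ⟨i, rfl⟩ := (hrange x).mp hx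
      have hi : i ≠ 0 := fun h => hne (by rw [h])
      obtain ⟨i', rfl⟩ := Fin.eq_succ_of_ne_zero hi
      exact ⟨i', rfl⟩
    · rintro ⟨i, rfl⟩
      refine ⟨fun h => (Fin.succ_ne_zero i) (hf.injective h), (hrange _).mpr ⟨i.succ, rfl⟩⟩
  have hcount' := card_initSeg_eq (s.erase (s.min' hs)) (fun i : Fin j' => f i.succ) hf' hrange'
  have hval : StrictMono (fun i : Fin (j' + 1) => (f i : ℕ)) := fun a b hab => hf hab
  have hile : ∀ i : Fin (j' + 1), (i : ℕ) ≤ (f i : ℕ) := fin_strictMono_le hval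
  -- bound on the top element
  have hlast : (f (Fin.last j') : ℕ) ≤ j' + t := by
    by_contra hcon
    push_neg at hcon
    have h1 : ((j' + 1) + t).choose (j' + 1) ≤ (f (Fin.last j') : ℕ).choose (j' + 1) :=
      Nat.choose_le_choose _ (by omega)
    have h2 : (f (Fin.last j') : ℕ).choose (((Fin.last j' : Fin (j'+1)) : ℕ) + 1)
        ≤ ∑ i : Fin (j' + 1), (f i : ℕ).choose ((i : ℕ) + 1) :=
      single_le_sum (f := fun i : Fin (j' + 1) => (f i : ℕ).choose ((i : ℕ) + 1))
        (fun i _ => Nat.zero_le _) (mem_univ (Fin.last j'))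
    rw [Fin.val_last] at h2
    omega
  have habound : ∀ i : Fin (j' + 1), (f i : ℕ) ≤ (i : ℕ) + t := by
    intro i
    have hgap := fin_strictMono_gap hval i (Fin.last j') (Fin.le_last i)
    rw [Fin.val_last] at hgap
    have := i.isLt
    omega
  -- apply the arithmetic lemma
  have harith := arith j' t (fun i => (f i : ℕ).choose ((i : ℕ) + 1))
      (fun i => (f i : ℕ).choose (i : ℕ)) ?_ ?_ ?_ ?_
  · have hble : 1 + ∑ i : Fin j', (f i.succ : ℕ).choose ((i.succ : ℕ)) ≤ #(∂ S) := by
      refine le_trans ?_ hKK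
      rw [hcount']
      apply le_of_eq
      congr 1
    have hSval : #S = 1 + ∑ i : Fin (j' + 1), (f i : ℕ).choose ((i : ℕ) + 1) := by
      rw [← hsm, hcount]
    calc (j' + 1) * #S
        = (j' + 1) * (1 + ∑ i : Fin (j' + 1), (f i : ℕ).choose ((i : ℕ) + 1)) := by rw [hSval]
      _ ≤ (2 * t + 4) * (1 + ∑ i : Fin j', (f i.succ : ℕ).choose ((i.succ : ℕ))) := harith
      _ ≤ (2 * t + 4) * #(∂ S) := Nat.mul_le_mul_left _ hble
  -- monotonicity of w
  · apply fin_mono_of_step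
    intro a a1 haa
    have h1 : (f a : ℕ) + 1 ≤ (f a1 : ℕ) := by
      have := hval (show a < a1 from Fin.lt_def.mpr (by omega))
      simp only at this
      omega
    have ha1 : (a1 : ℕ) = (a : ℕ) + 1 := by omega
    calc (f a : ℕ).choose ((a : ℕ) + 1)
        ≤ ((f a : ℕ) + 1).choose ((a : ℕ) + 2) := by
          rw [Nat.choose_succ_succ]
          omega
      _ ≤ (f a1 : ℕ).choose ((a : ℕ) + 2) := Nat.choose_le_choose _ h1
      _ = (f a1 : ℕ).choose ((a1 : ℕ) + 1) := by rw [ha1]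
  · intro i
    exact Nat.choose_pos (hile i)
  · intro i
    have hkey := Nat.choose_succ_right_eq (f i : ℕ) (i : ℕ)
    have hd : (f i : ℕ) - (i : ℕ) ≤ t := by
      have := habound i
      omega
    calc ((i : ℕ) + 1) * (f i : ℕ).choose ((i : ℕ) + 1)
        = (f i : ℕ).choose ((i : ℕ) + 1) * ((i : ℕ) + 1) := by ring
      _ = (f i : ℕ).choose (i : ℕ) * ((f i : ℕ) - (i : ℕ)) := hkey
      _ ≤ (f i : ℕ).choose (i : ℕ) * t := Nat.mul_le_mul_left _ hd
      _ = t * (f i : ℕ).choose (i : ℕ) := by ring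
  · simp




lemma choose_bound (Cn T d j : ℕ) (hTdef : T = 2 * Cn + 2) (hd : (2 * T) ^ T ≤ d)
    (hj : d ≤ 2 * j) : d ^ Cn ≤ (j + T).choose j := by
  have hd1 : 1 ≤ d := le_trans (Nat.one_le_pow _ _ (by omega)) hd
  have hsymm : (j + T).choose j = (j + T).choose T := by
    rw [← Nat.choose_symm (Nat.le_add_left T j)]
    congr 1
    omega
  have h1 : (j + 1) ^ T ≤ (j + T).descFactorial T := by
    have h := Nat.pow_sub_le_descFactorial (j + T) T
    have he : j + T + 1 - T = j + 1 := by omega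
    rwa [he] at h
  have h2 : (j + T).descFactorial T = T.factorial * (j + T).choose T :=
    Nat.descFactorial_eq_factorial_mul_choose _ _
  have h3 : d ^ T ≤ 2 ^ T * (j + 1) ^ T := by
    calc d ^ T ≤ (2 * (j + 1)) ^ T := Nat.pow_le_pow_left (by omega) T
      _ = 2 ^ T * (j + 1) ^ T := by rw [mul_pow]
  have h4 : d ^ Cn * (2 ^ T * T.factorial) ≤ d ^ T := by
    calc d ^ Cn * (2 ^ T * T.factorial)
        ≤ d ^ Cn * (2 * T) ^ T := by
          apply Nat.mul_le_mul_left
          calc 2 ^ T * T.factorial ≤ 2 ^ T * T ^ T :=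
                Nat.mul_le_mul_left _ (Nat.factorial_le_pow T)
            _ = (2 * T) ^ T := by rw [mul_pow]
      _ ≤ d ^ Cn * d := Nat.mul_le_mul_left _ hd
      _ = d ^ (Cn + 1) := by ring
      _ ≤ d ^ T := Nat.pow_le_pow_right hd1 (by omega)
  have h5 : d ^ Cn * T.factorial ≤ (j + 1) ^ T := by
    have hh : 2 ^ T * (d ^ Cn * T.factorial) ≤ 2 ^ T * (j + 1) ^ T := by
      calc 2 ^ T * (d ^ Cn * T.factorial) = d ^ Cn * (2 ^ T * T.factorial) := by ring
        _ ≤ d ^ T := h4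
        _ ≤ 2 ^ T * (j + 1) ^ T := h3
    exact Nat.le_of_mul_le_mul_left hh (by positivity)
  have h6 : T.factorial * d ^ Cn ≤ T.factorial * (j + T).choose T := by
    calc T.factorial * d ^ Cn = d ^ Cn * T.factorial := by ring
      _ ≤ (j + 1) ^ T := h5
      _ ≤ (j + T).descFactorial T := h1
      _ = T.factorial * (j + T).choose T := h2
  rw [hsymm]
  exact Nat.le_of_mul_le_mul_left h6 (Nat.factorial_pos T)

variable {d : ℕ}

def supp (v : Fin d → Bool) : Finset (Fin d) := univ.filter (fun i => v i = true)

def vtx (T : Finset (Fin d)) : Fin d → Bool := fun i => decide (i ∈ T)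

lemma supp_vtx (T : Finset (Fin d)) : supp (vtx T) = T := by
  ext i; simp [supp, vtx]

lemma vtx_supp (v : Fin d → Bool) : vtx (supp v) = v := by
  funext i
  simp only [supp, vtx, mem_filter, mem_univ, true_and]
  cases h : v i <;> simp [h]

lemma supp_inj : Function.Injective (supp (d := d)) := by
  intro u v h
  rw [← vtx_supp u, ← vtx_supp v, h]

lemma adj_of_insert (v : Fin d → Bool) (x : Fin d) (hx : x ∉ supp v) :
    (cube d).Adj v (vtx (insert x (supp v))) := by
  show hammingDist v (vtx (insert x (supp v))) = 1
  have hset : filter (fun i => v i ≠ vtx (insert x (supp v)) i) univ = {x} := by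
    ext i
    simp only [mem_filter, mem_univ, true_and, mem_singleton]
    constructor
    · intro hne
      by_contra hix
      apply hne
      rw [show vtx (insert x (supp v)) i = vtx (supp v) i from by
        simp [vtx, decide_eq_decide, mem_insert, hix]]
      rw [congrFun (vtx_supp v) i]
    · intro hi
      rw [hi]
      have h1 : v x = false := by
        simp only [supp, mem_filter, mem_univ, true_and, Bool.not_eq_true] at hx
        exact hx
      have h2 : vtx (insert x (supp v)) x = true := by simp [vtx]
      rw [h1, h2]
      simp
  rw [hammingDist, hset, card_singleton]

lemma adj_of_erase (v : Fin d → Bool) (x : Fin d) (hx : x ∈ supp v) :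
    (cube d).Adj v (vtx ((supp v).erase x)) := by
  show hammingDist v (vtx ((supp v).erase x)) = 1
  have hset : filter (fun i => v i ≠ vtx ((supp v).erase x) i) univ = {x} := by
    ext i
    simp only [mem_filter, mem_univ, true_and, mem_singleton]
    constructor
    · intro hne
      by_contra hix
      apply hne
      rw [show vtx ((supp v).erase x) i = vtx (supp v) i from by
        simp [vtx, decide_eq_decide, mem_erase, hix]]
      rw [congrFun (vtx_supp v) i]
    · intro hi
      rw [hi]
      have h1 : v x = true := by
        simpa only [supp, mem_filter, mem_univ, true_and] using hx
      have h2 : vtx ((supp v).erase x) x = false := by simp [vtx]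
      rw [h1, h2]
      simp
  rw [hammingDist, hset, card_singleton]


end IsoAux
namespace IsoAux

theorem main (C : ℝ) :
    ∃ c : ℝ, 0 < c ∧ ∃ d₀ : ℕ, ∀ d : ℕ, d₀ ≤ d →
      ∀ A : Set (Fin d → Bool), (∀ v ∈ A, isEvenVtx v) →
        (A.ncard : ℝ) ≤ (d : ℝ) ^ C →
        c * d * A.ncard ≤ ((nbhd A).ncard : ℝ) := by
  set Cn : ℕ := ⌈C⌉₊ + 1 with hCn
  set T : ℕ := 2 * Cn + 2 with hT
  refine ⟨1 / (8 * T + 16), by positivity, (2 * T) ^ T + 1, ?_⟩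
  intro d hd A _ hA
  have hfinA : A.Finite := Set.toFinite A
  have hfinN : (nbhd A).Finite := Set.toFinite _
  set F : Finset (Fin d → Bool) := hfinA.toFinset with hF
  set NF : Finset (Fin d → Bool) := hfinN.toFinset with hNF
  have hAcard : A.ncard = #F := Set.ncard_eq_toFinset_card A hfinA
  have hNcard : (nbhd A).ncard = #NF := Set.ncard_eq_toFinset_card _ hfinN
  have hdT : (2 * T) ^ T ≤ d := by omega
  have hd1 : 1 ≤ d := le_trans (Nat.one_le_pow _ _ (by omega)) hdT
  -- m ≤ d ^ Cn
  have hmCn : #F ≤ d ^ Cn := by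
    have h1 : (#F : ℝ) ≤ (d : ℝ) ^ (Cn : ℝ) := by
      calc (#F : ℝ) = (A.ncard : ℝ) := by rw [hAcard]
        _ ≤ (d : ℝ) ^ C := hA
        _ ≤ (d : ℝ) ^ (Cn : ℝ) := by
            apply Real.rpow_le_rpow_of_exponent_le
            · exact_mod_cast hd1
            · calc C ≤ (⌈C⌉₊ : ℝ) := Nat.le_ceil C
                _ ≤ (Cn : ℝ) := by rw [hCn]; push_cast; linarith
    rw [Real.rpow_natCast] at h1
    exact_mod_cast h1
  -- layer families
  set 𝒜 : ℕ → Finset (Finset (Fin d)) :=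
    fun k => (F.filter (fun v => #(supp v) = k)).image supp with h𝒜
  have hsized : ∀ k, Set.Sized k ((𝒜 k) : Set (Finset (Fin d))) := by
    intro k Tt hTt
    rw [mem_coe, h𝒜] at hTt
    obtain ⟨v, hv, rfl⟩ := mem_image.mp hTt
    exact (mem_filter.mp hv).2
  have hsum : ∑ k ∈ range (d + 1), #(𝒜 k) = #F := by
    have himg : ∀ k, #(𝒜 k) = #(F.filter (fun v => #(supp v) = k)) := fun k =>
      card_image_of_injective _ supp_inj
    rw [sum_congr rfl (fun k _ => himg k)]
    symm
    apply card_eq_sum_card_fiberwise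
    intro v _
    simp only [mem_coe, mem_range]
    have : #(supp v) ≤ d := by
      calc #(supp v) ≤ Fintype.card (Fin d) := card_le_univ _
        _ = d := Fintype.card_fin d
    omega
  have hml : ∀ k, #(𝒜 k) ≤ #F := fun k => le_trans card_image_le (card_filter_le _ _)
  -- shadows land in the neighbourhood
  have h_down_sub : ∀ k, ∂ (𝒜 k) ⊆ NF.image supp := by
    intro k Tt hTt
    obtain ⟨S, hS, x, hxS, rfl⟩ := mem_shadow_iff.mp hTt
    rw [h𝒜] at hS
    obtain ⟨v, hv, rfl⟩ := mem_image.mp hS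
    have hvmem : v ∈ A := hfinA.mem_toFinset.mp (mem_filter.mp hv).1
    refine mem_image.mpr ⟨vtx ((supp v).erase x), ?_, supp_vtx _⟩
    rw [hNF, Set.Finite.mem_toFinset]
    exact ⟨v, hvmem, adj_of_erase v x hxS⟩
  have h_up_sub : ∀ k, ∂⁺ (𝒜 k) ⊆ NF.image supp := by
    intro k Tt hTt
    obtain ⟨S, hS, x, hxS, rfl⟩ := mem_upShadow_iff.mp hTt
    rw [h𝒜] at hS
    obtain ⟨v, hv, rfl⟩ := mem_image.mp hS
    have hvmem : v ∈ A := hfinA.mem_toFinset.mp (mem_filter.mp hv).1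
    refine mem_image.mpr ⟨vtx (insert x (supp v)), ?_, supp_vtx _⟩
    rw [hNF, Set.Finite.mem_toFinset]
    exact ⟨v, hvmem, adj_of_insert v x hxS⟩
  have h_down_sum : ∑ k ∈ range (d + 1), #(∂ (𝒜 k)) ≤ #NF := by
    have hdisj : ∀ k ∈ range (d+1), ∀ k' ∈ range (d+1), k ≠ k' →
        Disjoint (∂ (𝒜 k)) (∂ (𝒜 k')) := by
      intro k _ k' _ hkk'
      rw [disjoint_left]
      intro Tt hTk hTk'
      obtain ⟨S, hS, x, hxS, rfl⟩ := mem_shadow_iff.mp hTk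
      obtain ⟨S', hS', x', hxS', heq⟩ := mem_shadow_iff.mp hTk'
      have h1 : #S = k := hsized k (mem_coe.mpr hS)
      have h2 : #S' = k' := hsized k' (mem_coe.mpr hS')
      have h3 : #(S.erase x) = #S - 1 := card_erase_of_mem hxS
      have h4 : #(S'.erase x') = #S' - 1 := card_erase_of_mem hxS'
      have h5 : 0 < #S := card_pos.mpr ⟨x, hxS⟩
      have h6 : 0 < #S' := card_pos.mpr ⟨x', hxS'⟩
      rw [heq] at h4
      omega
    calc ∑ k ∈ range (d + 1), #(∂ (𝒜 k))
        = #((range (d+1)).biUnion (fun k => ∂ (𝒜 k))) := (card_biUnion hdisj).symm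
      _ ≤ #(NF.image supp) := card_le_card (biUnion_subset.mpr fun k _ => h_down_sub k)
      _ ≤ #NF := card_image_le
  have h_up_sum : ∑ k ∈ range (d + 1), #(∂⁺ (𝒜 k)) ≤ #NF := by
    have hdisj : ∀ k ∈ range (d+1), ∀ k' ∈ range (d+1), k ≠ k' →
        Disjoint (∂⁺ (𝒜 k)) (∂⁺ (𝒜 k')) := by
      intro k _ k' _ hkk'
      rw [disjoint_left]
      intro Tt hTk hTk'
      have h1 : #Tt = k + 1 := (hsized k).upShadow (mem_coe.mpr hTk)
      have h2 : #Tt = k' + 1 := (hsized k').upShadow (mem_coe.mpr hTk')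
      omega
    calc ∑ k ∈ range (d + 1), #(∂⁺ (𝒜 k))
        = #((range (d+1)).biUnion (fun k => ∂⁺ (𝒜 k))) := (card_biUnion hdisj).symm
      _ ≤ #(NF.image supp) := card_le_card (biUnion_subset.mpr fun k _ => h_up_sub k)
      _ ≤ #NF := card_image_le
  -- per-layer bound
  have h_layer : ∀ k ∈ range (d + 1), d * #(𝒜 k) ≤
      (4 * T + 8) * (#(∂ (𝒜 k)) + #(∂⁺ (𝒜 k))) := by
    intro k hk
    rw [mem_range] at hk
    by_cases hcase : d ≤ 2 * k
    · have hb : #(𝒜 k) ≤ (k + T).choose k :=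
        le_trans (hml k) (le_trans hmCn (choose_bound Cn T d k hT hdT hcase))
      have hkk := kk_mult k T (𝒜 k) (hsized k) hb
      calc d * #(𝒜 k) ≤ 2 * k * #(𝒜 k) := Nat.mul_le_mul_right _ hcase
        _ = 2 * (k * #(𝒜 k)) := by ring
        _ ≤ 2 * ((2 * T + 4) * #(∂ (𝒜 k))) := Nat.mul_le_mul_left _ hkk
        _ = (4 * T + 8) * #(∂ (𝒜 k)) := by ring
        _ ≤ (4 * T + 8) * (#(∂ (𝒜 k)) + #(∂⁺ (𝒜 k))) :=
            Nat.mul_le_mul_left _ (Nat.le_add_right _ _)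
    · have hj : d ≤ 2 * (d - k) := by omega
      have hsz : Set.Sized (d - k) (((𝒜 k)ᶜˢ : Finset (Finset (Fin d))) :
          Set (Finset (Fin d))) := by
        intro Tt hTt
        rw [mem_coe, mem_compls] at hTt
        have h1 : #(Ttᶜ) = k := hsized k (mem_coe.mpr hTt)
        have h2 : #(Ttᶜ) = Fintype.card (Fin d) - #Tt := card_compl Tt
        have h3 : #Tt ≤ Fintype.card (Fin d) := card_le_univ _
        rw [Fintype.card_fin] at h2 h3
        omega
      have hcard𝒜 : #((𝒜 k)ᶜˢ) = #(𝒜 k) := card_compls _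
      have hb : #((𝒜 k)ᶜˢ) ≤ ((d - k) + T).choose (d - k) := by
        rw [hcard𝒜]
        exact le_trans (hml k) (le_trans hmCn (choose_bound Cn T d (d - k) hT hdT hj))
      have hkk := kk_mult (d - k) T ((𝒜 k)ᶜˢ) hsz hb
      rw [hcard𝒜, shadow_compls, card_compls] at hkk
      calc d * #(𝒜 k) ≤ 2 * (d - k) * #(𝒜 k) := Nat.mul_le_mul_right _ hj
        _ = 2 * ((d - k) * #(𝒜 k)) := by ring
        _ ≤ 2 * ((2 * T + 4) * #(∂⁺ (𝒜 k))) := Nat.mul_le_mul_left _ hkk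
        _ = (4 * T + 8) * #(∂⁺ (𝒜 k)) := by ring
        _ ≤ (4 * T + 8) * (#(∂ (𝒜 k)) + #(∂⁺ (𝒜 k))) :=
            Nat.mul_le_mul_left _ (Nat.le_add_left _ _)
  -- combine
  have hmain : d * #F ≤ (8 * T + 16) * #NF := by
    calc d * #F = ∑ k ∈ range (d + 1), d * #(𝒜 k) := by rw [← mul_sum, hsum]
      _ ≤ ∑ k ∈ range (d + 1), (4 * T + 8) * (#(∂ (𝒜 k)) + #(∂⁺ (𝒜 k))) :=
          sum_le_sum h_layer
      _ = (4 * T + 8) * (∑ k ∈ range (d + 1), #(∂ (𝒜 k)) +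
            ∑ k ∈ range (d + 1), #(∂⁺ (𝒜 k))) := by
          rw [← mul_sum, sum_add_distrib]
      _ ≤ (4 * T + 8) * (#NF + #NF) :=
          Nat.mul_le_mul_left _ (Nat.add_le_add h_down_sum h_up_sum)
      _ = (8 * T + 16) * #NF := by ring
  -- back to ℝ
  rw [hAcard, hNcard]
  have h8 : (0 : ℝ) < 8 * (T : ℝ) + 16 := by positivity
  have hmainR : (d : ℝ) * (#F : ℝ) ≤ (8 * (T : ℝ) + 16) * (#NF : ℝ) := by
    exact_mod_cast hmain
  have heq : 1 / (8 * (T : ℝ) + 16) * (d : ℝ) * (#F : ℝ)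
      = ((d : ℝ) * (#F : ℝ)) / (8 * (T : ℝ) + 16) := by ring
  rw [heq, div_le_iff₀ h8]
  calc (d : ℝ) * (#F : ℝ) ≤ (8 * (T : ℝ) + 16) * (#NF : ℝ) := hmainR
    _ = (#NF : ℝ) * (8 * (T : ℝ) + 16) := by ring

end IsoAux


/-- Isoperimetry for small sets: for each fixed `C`, there is `c > 0` such that for
all large `d`, every set `A` of even vertices with `|A| ≤ d^C` satisfies
`|N(A)| ≥ c·d·|A|`. -/
theorem isoperimetry_small_sets (C : ℝ) :
    ∃ c : ℝ, 0 < c ∧ ∃ d₀ : ℕ, ∀ d : ℕ, d₀ ≤ d →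
      ∀ A : Set (Fin d → Bool), (∀ v ∈ A, isEvenVtx v) →
        (A.ncard : ℝ) ≤ (d : ℝ) ^ C →
        c * d * A.ncard ≤ ((nbhd A).ncard : ℝ) := by
  exact IsoAux.main C
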